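/- Let h : ℝ → ℝ be continuous with |h(t)| ≤ a + b|t|^(p-1) for constants a, b ≥ 0 and p > 1, and suppose limsup_{t→±∞} h(t)/(|t|^(p-2)t) < 0. Then H(t) := ∫₀ᵗ h(τ)dτ satisfies limsup_{|t|→∞} H(t)/|t|^p < 0; in particular H(t) → -∞ as |t| → ∞. -/

import Mathlib

open Filter intervalIntegral

lemma aux_pow_int (p : ℝ) (hp : 1 < p) (c s t : ℝ) :
    (∫ τ in s..t, c * τ ^ (p - 1)) = c / p * t ^ p - c / p * s ^ p := by
  rw [integral_const_mul, integral_rpow (Or.inl (by linarith))]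
  have hp0 : p ≠ 0 := by positivity
  have : p - 1 + 1 = p := by ring
  rw [this]
  field_simp

lemma aux_upper (p a b ε : ℝ) (hp : 1 < p) (ha : 0 ≤ a) (hb : 0 ≤ b) (hε : 0 < ε)
    (h : ℝ → ℝ) (hcont : Continuous h)
    (hgrowth : ∀ t : ℝ, 0 ≤ t → |h t| ≤ a + b * t ^ (p - 1))
    (T : ℝ) (hT : 1 ≤ T) (hdec : ∀ t, T ≤ t → h t ≤ -ε * t ^ (p - 1)) :
    ∃ D : ℝ, (∀ t, T ≤ t → (∫ τ in (0:ℝ)..t, h τ) ≤ D - ε / p * t ^ p) ∧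
      (∀ t, 1 ≤ t → -(a + b / p) * t ^ p ≤ ∫ τ in (0:ℝ)..t, h τ) := by
  have hrc : Continuous (fun x : ℝ => x ^ (p - 1)) := Real.continuous_rpow_const (by linarith)
  refine ⟨(∫ τ in (0:ℝ)..T, h τ) + ε / p * T ^ p, fun t ht => ?_, fun t ht => ?_⟩
  · have hIt : (∫ τ in (0:ℝ)..T, h τ) + (∫ τ in T..t, h τ) = ∫ τ in (0:ℝ)..t, h τ :=
      integral_add_adjacent_intervals (hcont.intervalIntegrable _ _) (hcont.intervalIntegrable _ _)
    have hmono : (∫ τ in T..t, h τ) ≤ ∫ τ in T..t, -ε * τ ^ (p - 1) := by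
      refine integral_mono_on ht (hcont.intervalIntegrable _ _)
        ((continuous_const.mul hrc).intervalIntegrable _ _) fun x hx => hdec x hx.1
    rw [aux_pow_int p hp (-ε) T t] at hmono
    have : -ε / p = -(ε / p) := by ring
    rw [this] at hmono
    linarith
  · have h0t : (0:ℝ) ≤ t := by linarith
    have habs : |∫ τ in (0:ℝ)..t, h τ| ≤ ∫ τ in (0:ℝ)..t, |h τ| :=
      abs_integral_le_integral_abs h0t
    have hmono : (∫ τ in (0:ℝ)..t, |h τ|) ≤ ∫ τ in (0:ℝ)..t, (a + b * τ ^ (p - 1)) := by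
      refine integral_mono_on h0t (hcont.abs.intervalIntegrable _ _)
        ((continuous_const.add (continuous_const.mul hrc)).intervalIntegrable _ _)
        fun x hx => hgrowth x hx.1
    have hcomp : (∫ τ in (0:ℝ)..t, (a + b * τ ^ (p - 1))) = a * t + b / p * t ^ p := by
      rw [integral_add (f := fun _ => a) (g := fun τ => b * τ ^ (p - 1)) (intervalIntegrable_const) ((continuous_const.mul hrc).intervalIntegrable _ _),
        integral_const, aux_pow_int p hp b 0 t, Real.zero_rpow (by positivity : p ≠ 0)]
      simp [smul_eq_mul]
      ring
    have htp : t ≤ t ^ p := by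
      calc t = t ^ (1:ℝ) := (Real.rpow_one t).symm
        _ ≤ t ^ p := Real.rpow_le_rpow_of_exponent_le ht (by linarith)
    have h1 := neg_abs_le (∫ τ in (0:ℝ)..t, h τ)
    nlinarith [habs, hmono]

theorem stmt_10 (p a b : ℝ) (hp : 1 < p) (ha : 0 ≤ a) (hb : 0 ≤ b)
    (h : ℝ → ℝ) (hcont : Continuous h)
    (hgrowth : ∀ t : ℝ, |h t| ≤ a + b * |t| ^ (p - 1))
    (hlim : limsup (fun t : ℝ => h t / (|t| ^ (p - 2) * t)) (atBot ⊔ atTop) < 0) :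
    limsup (fun t : ℝ => (∫ τ in (0 : ℝ)..t, h τ) / |t| ^ p) (atBot ⊔ atTop) < 0 ∧
      Tendsto (fun t : ℝ => ∫ τ in (0 : ℝ)..t, h τ) (atBot ⊔ atTop) atBot := by
  have hp0 : 0 < p := by linarith
  haveI hNB : (atBot ⊔ atTop : Filter ℝ).NeBot := sup_neBot.2 (Or.inl atBot_neBot)
  -- eventually |t| ≥ 1
  have hev1 : ∀ᶠ t : ℝ in atBot ⊔ atTop, (1:ℝ) ≤ |t| := by
    rw [eventually_sup]
    constructor
    · filter_upwards [eventually_le_atBot (-1:ℝ)] with t ht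
      rw [abs_of_nonpos (by linarith)]; linarith
    · filter_upwards [eventually_ge_atTop (1:ℝ)] with t ht
      rw [abs_of_nonneg (by linarith)]; exact ht
  -- bound on the quotient
  have key1 : ∀ t : ℝ, 1 ≤ |t| → h t / (|t| ^ (p - 2) * t) ≤ a + b := by
    intro t ht
    have ht0 : t ≠ 0 := by
      intro h0; rw [h0, abs_zero] at ht; linarith
    have habs0 : (0:ℝ) < |t| := abs_pos.2 ht0
    have hd : |(|t| ^ (p - 2) * t)| = |t| ^ (p - 1) := by
      rw [abs_mul, abs_of_nonneg (Real.rpow_nonneg (abs_nonneg t) _),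
        ← Real.rpow_add_one habs0.ne' (p - 2), show p - 2 + 1 = p - 1 from by ring]
    have hX : (1:ℝ) ≤ |t| ^ (p - 1) := Real.one_le_rpow ht (by linarith)
    calc h t / (|t| ^ (p - 2) * t) ≤ |h t / (|t| ^ (p - 2) * t)| := le_abs_self _
      _ = |h t| / (|t| ^ (p - 1)) := by rw [abs_div, hd]
      _ ≤ (a + b * |t| ^ (p - 1)) / (|t| ^ (p - 1)) := by
          exact (div_le_div_iff_of_pos_right (by linarith)).2 (hgrowth t)
      _ ≤ a + b := by
          rw [div_le_iff₀ (by linarith)]; nlinarith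
  have hbdd : IsBoundedUnder (· ≤ ·) (atBot ⊔ atTop)
      (fun t : ℝ => h t / (|t| ^ (p - 2) * t)) :=
    ⟨a + b, eventually_map.2 (hev1.mono key1)⟩
  obtain ⟨ε, hεpos, hev2⟩ : ∃ ε : ℝ, 0 < ε ∧
      ∀ᶠ t : ℝ in atBot ⊔ atTop, h t / (|t| ^ (p - 2) * t) < -ε :=
    ⟨-(limsup (fun t : ℝ => h t / (|t| ^ (p - 2) * t)) (atBot ⊔ atTop)) / 2, by linarith,
      eventually_lt_of_limsup_lt (by linarith) hbdd⟩
  -- extract thresholds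
  rw [eventually_sup] at hev2
  obtain ⟨T₂, h2⟩ := eventually_atBot.1 hev2.1
  obtain ⟨T₁, h1⟩ := eventually_atTop.1 hev2.2
  set T : ℝ := max 1 (max T₁ (-T₂)) with hTdef
  have hT1 : (1:ℝ) ≤ T := le_max_left _ _
  have hdec : ∀ t, T ≤ t → h t ≤ -ε * t ^ (p - 1) := by
    intro t ht
    have ht1 : (1:ℝ) ≤ t := le_trans hT1 ht
    have htpos : (0:ℝ) < t := by linarith
    have hq := h1 t (le_trans (le_trans (le_max_left _ _) (le_max_right 1 _)) ht)
    rw [abs_of_pos htpos, ← Real.rpow_add_one htpos.ne' (p - 2),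
      show p - 2 + 1 = p - 1 from by ring] at hq
    have hdpos : (0:ℝ) < t ^ (p - 1) := Real.rpow_pos_of_pos htpos _
    have := (div_lt_iff₀ hdpos).1 hq
    linarith
  have hinc : ∀ t, t ≤ -T → ε * (-t) ^ (p - 1) ≤ h t := by
    intro t ht
    have ht2 : t ≤ T₂ := by
      have : -T₂ ≤ T := le_trans (le_max_right T₁ _) (le_max_right 1 _)
      linarith
    have htneg : t < 0 := by
      have := hT1; linarith
    have hq := h2 t ht2
    rw [abs_of_neg htneg] at hq
    have hXpos : (0:ℝ) < (-t) ^ (p - 1) := Real.rpow_pos_of_pos (by linarith) _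
    have hden : |t| ^ (p - 2) * t = -((-t) ^ (p - 1)) := by
      rw [abs_of_neg htneg]
      calc (-t) ^ (p - 2) * t = -((-t) ^ (p - 2) * (-t)) := by ring
        _ = -((-t) ^ (p - 2 + 1)) := by
            rw [Real.rpow_add_one (by linarith : (0:ℝ) < -t).ne' (p - 2)]
        _ = -((-t) ^ (p - 1)) := by rw [show p - 2 + 1 = p - 1 from by ring]
    rw [abs_of_neg htneg] at hden
    rw [hden] at hq
    have := (div_lt_iff_of_neg (by linarith : -((-t) ^ (p - 1)) < 0)).1 hq
    nlinarith
  -- growth on nonneg reals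
  have hgrowth' : ∀ t : ℝ, 0 ≤ t → |h t| ≤ a + b * t ^ (p - 1) := by
    intro t ht
    have := hgrowth t
    rwa [abs_of_nonneg ht] at this
  obtain ⟨D₁, hD₁u, hD₁l⟩ := aux_upper p a b ε hp ha hb hεpos h hcont hgrowth' T hT1 hdec
  set g : ℝ → ℝ := fun x => -h (-x) with hgdef
  have hgc : Continuous g := (hcont.comp continuous_neg).neg
  have hgrowthg : ∀ t : ℝ, 0 ≤ t → |g t| ≤ a + b * t ^ (p - 1) := by
    intro t ht
    have := hgrowth (-t)
    rw [abs_neg, abs_of_nonneg ht] at this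
    simpa [hgdef, abs_neg] using this
  have hdecg : ∀ t, T ≤ t → g t ≤ -ε * t ^ (p - 1) := by
    intro t ht
    have := hinc (-t) (by linarith)
    rw [neg_neg] at this
    simp only [hgdef]
    linarith
  obtain ⟨D₂, hD₂u, hD₂l⟩ := aux_upper p a b ε hp ha hb hεpos g hgc hgrowthg T hT1 hdecg
  have hgint : ∀ s : ℝ, (∫ τ in (0:ℝ)..s, g τ) = ∫ τ in (0:ℝ)..(-s), h τ := by
    intro s
    calc (∫ τ in (0:ℝ)..s, g τ) = -∫ τ in (0:ℝ)..s, h (-τ) := by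
          simp only [hgdef]; rw [integral_neg]
      _ = -∫ τ in (-s)..(-0:ℝ), h τ := by rw [integral_comp_neg]
      _ = ∫ τ in (0:ℝ)..(-s), h τ := by rw [neg_zero, ← integral_symm]
  -- combined bounds
  have hub : ∀ t : ℝ, T ≤ |t| → (∫ τ in (0:ℝ)..t, h τ) ≤ max D₁ D₂ - ε / p * |t| ^ p := by
    intro t ht
    rcases le_or_gt 0 t with h0 | h0
    · rw [abs_of_nonneg h0] at ht ⊢
      exact le_trans (hD₁u t ht) (by gcongr; exact le_max_left _ _)
    · rw [abs_of_neg h0] at ht ⊢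
      have := hD₂u (-t) ht
      rw [hgint, neg_neg] at this
      exact le_trans this (by gcongr; exact le_max_right _ _)
  have hlb : ∀ t : ℝ, 1 ≤ |t| → -(a + b / p) * |t| ^ p ≤ ∫ τ in (0:ℝ)..t, h τ := by
    intro t ht
    rcases le_or_gt 0 t with h0 | h0
    · rw [abs_of_nonneg h0] at ht ⊢
      exact hD₁l t ht
    · rw [abs_of_neg h0] at ht ⊢
      have := hD₂l (-t) ht
      rwa [hgint, neg_neg] at this
  -- limits
  have habs : Tendsto (fun t : ℝ => |t|) (atBot ⊔ atTop) atTop :=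
    tendsto_sup.2 ⟨tendsto_abs_atBot_atTop, tendsto_abs_atTop_atTop⟩
  have htend : Tendsto (fun t : ℝ => |t| ^ p) (atBot ⊔ atTop) atTop :=
    (tendsto_rpow_atTop hp0).comp habs
  set K := max D₁ D₂ with hKdef
  have hevT : ∀ᶠ t : ℝ in atBot ⊔ atTop, T ≤ |t| := habs.eventually_ge_atTop T
  have hevK : ∀ᶠ t : ℝ in atBot ⊔ atTop, 2 * p * K / ε ≤ |t| ^ p :=
    htend.eventually_ge_atTop _
  have hevfinal : ∀ᶠ t : ℝ in atBot ⊔ atTop,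
      (∫ τ in (0:ℝ)..t, h τ) / |t| ^ p ≤ -(ε / (2 * p)) := by
    filter_upwards [hevT, hevK, hev1] with t h1t h2t h3t
    have hXpos : (0:ℝ) < |t| ^ p := Real.rpow_pos_of_pos (by linarith) _
    rw [div_le_iff₀ hXpos]
    have h2t' : 2 * p * K ≤ |t| ^ p * ε := (div_le_iff₀ hεpos).1 h2t
    have hKb : K * (2 * p) ≤ ε / (2 * p) * |t| ^ p * (2 * p) := by
      have : ε / (2 * p) * |t| ^ p * (2 * p) = |t| ^ p * ε := by
        field_simp
      rw [this]; linarith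
    have hKb' : K ≤ ε / (2 * p) * |t| ^ p :=
      le_of_mul_le_mul_right hKb (by linarith : (0:ℝ) < 2 * p)
    have hub' := hub t h1t
    have hhalf : ε / p * |t| ^ p = 2 * (ε / (2 * p) * |t| ^ p) := by
      field_simp
    nlinarith
  have hcob : IsCoboundedUnder (· ≤ ·) (atBot ⊔ atTop)
      (fun t : ℝ => (∫ τ in (0:ℝ)..t, h τ) / |t| ^ p) := by
    apply IsBoundedUnder.isCoboundedUnder_le
    refine ⟨-(a + b / p), eventually_map.2 ?_⟩
    filter_upwards [hev1] with t ht
    have hXpos : (0:ℝ) < |t| ^ p := Real.rpow_pos_of_pos (by linarith) _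
    rw [le_div_iff₀ hXpos]
    exact le_trans (le_of_eq (by ring)) (hlb t ht)
  constructor
  · refine lt_of_le_of_lt (limsup_le_of_le hcob hevfinal) ?_
    have : (0:ℝ) < ε / (2 * p) := by positivity
    linarith
  · have h5 : Tendsto (fun t : ℝ => ε / p * |t| ^ p) (atBot ⊔ atTop) atTop :=
      htend.const_mul_atTop (by positivity)
    have h6 : Tendsto (fun t : ℝ => K - ε / p * |t| ^ p) (atBot ⊔ atTop) atBot := by
      simpa [sub_eq_add_neg] using
        tendsto_atBot_add_const_left (atBot ⊔ atTop) K (tendsto_neg_atTop_atBot.comp h5)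
    refine tendsto_atBot_mono' _ ?_ h6
    filter_upwards [hevT] with t ht
    exact hub t ht
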